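/- arXiv:0807.4229 — 4 statements merged into one kernel-verified Lean document; each statement's English description precedes it below -/
import Mathlib

section
/- Let X = ∏_{i=1}^n X_i be a product of n finite intervals of integers, each of cardinality at least 2, and let F be a map from X to itself. If I ⊆ {1,…,n} is such that every positive circuit of the global interaction graph G(F) has at least one vertex in I, then the number of attractors of the asynchronous state transition graph Γ(F) is at most ∏_{i∈I} |X_i|; in particular, the number of fixed points of F is at most ∏_{i∈I} |X_i|. -/
/-! Common definitions for discrete dynamical systems on products of
integer intervals, following Richard, "Positive circuits and maximal
number of fixed points in discrete dynamical systems". -/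

/-- The state space `X = ∏ i, [a i, b i]` as a subset of `Fin n → ℤ`. -/
def StateSpace {n : ℕ} (a b : Fin n → ℤ) : Set (Fin n → ℤ) :=
  {x | ∀ i, a i ≤ x i ∧ x i ≤ b i}

/-- `v` is a directional vector, i.e. `v ∈ {-1,1}^n`. -/
def IsDir {n : ℕ} (v : Fin n → ℤ) : Prop := ∀ i, v i = 1 ∨ v i = -1

/-- `(x, v) ∈ X'`: `x ∈ X`, `v ∈ {-1,1}^n` and `x + v ∈ X`. -/
def InX' {n : ℕ} (a b : Fin n → ℤ) (x v : Fin n → ℤ) : Prop :=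
  x ∈ StateSpace a b ∧ IsDir v ∧ (x + v) ∈ StateSpace a b

/-- Discrete Jacobian entry `f_ij(x,v) = (f_i(x + v_j e_j) - f_i(x)) / v_j`. -/
def jac {n : ℕ} (F : (Fin n → ℤ) → Fin n → ℤ) (x v : Fin n → ℤ) (i j : Fin n) : ℤ :=
  (F (Function.update x j (x j + v j)) i - F x i) / v j

/-- A signed edge `(j, s, i)`: initial vertex `j`, sign `s`, final vertex `i`. -/
abbrev SEdge (n : ℕ) := Fin n × ℤ × Fin n

/-- Edge set of the local interaction graph `𝐆_F(x,v)`: a positive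
(resp. negative) edge from `j` to `i` iff `f_ij(x,v) > 0` (resp. `< 0`). -/
def localGraph {n : ℕ} (F : (Fin n → ℤ) → Fin n → ℤ) (x v : Fin n → ℤ) :
    Set (SEdge n) :=
  {e | (e.2.1 = 1 ∧ 0 < jac F x v e.2.2 e.1) ∨ (e.2.1 = -1 ∧ jac F x v e.2.2 e.1 < 0)}

/-- `p` and `q` are on both sides of `t`. -/
def BothSides (p q t : ℚ) : Prop := (p < t ∧ t < q) ∨ (q < t ∧ t < p)

/-- Edge set of the local interaction graph with thresholds `G_F(x,v)`:
an edge `(j,s,i)` of `𝐆_F(x,v)` such that moreover `f_i(x)` and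
`f_i(x + v_j e_j)` are on both sides of the threshold `x_i + v_i / 2`. -/
def localGraphT {n : ℕ} (F : (Fin n → ℤ) → Fin n → ℤ) (x v : Fin n → ℤ) :
    Set (SEdge n) :=
  {e | e ∈ localGraph F x v ∧
    BothSides (F x e.2.2) (F (Function.update x e.1 (x e.1 + v e.1)) e.2.2)
      ((x e.2.2 : ℚ) + (v e.2.2 : ℚ) / 2)}

/-- `c` is an (elementary) circuit of the signed graph with edge set `E`:
a nonempty sequence of consecutive edges, closing up, whose initial
vertices are mutually distinct. -/
def IsCircuit {n : ℕ} (E : Set (SEdge n)) (c : List (SEdge n)) : Prop :=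
  c ≠ [] ∧ (∀ e ∈ c, e ∈ E) ∧
  (∀ (k : ℕ) (h : k + 1 < c.length),
    (c.get ⟨k, Nat.lt_of_succ_lt h⟩).2.2 = (c.get ⟨k + 1, h⟩).1) ∧
  (c.getLast?).map (fun e => e.2.2) = (c.head?).map (fun e => e.1) ∧
  (c.map (fun e => e.1)).Nodup

/-- A positive circuit: a circuit whose product of signs is positive. -/
def IsPosCircuit {n : ℕ} (E : Set (SEdge n)) (c : List (SEdge n)) : Prop :=
  IsCircuit E c ∧ 0 < (c.map (fun e => e.2.1)).prod

/-- The graph `E` has a positive circuit. -/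
def HasPosCircuit {n : ℕ} (E : Set (SEdge n)) : Prop := ∃ c, IsPosCircuit E c

/-- Vertex `i` belongs to some positive circuit of `E`. -/
def MemPosCircuit {n : ℕ} (E : Set (SEdge n)) (i : Fin n) : Prop :=
  ∃ c, IsPosCircuit E c ∧ i ∈ c.map (fun e => e.1)

/-- `I` is a positive feedback vertex set of `E`: every positive circuit
of `E` has at least one vertex in `I`. -/
def IsPFVS {n : ℕ} (E : Set (SEdge n)) (I : Finset (Fin n)) : Prop :=
  ∀ c, IsPosCircuit E c → ∃ i ∈ I, i ∈ c.map (fun e => e.1)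

/-- `T_i(G_F)`: the set of real numbers `t` such that `t = x_i + v_i/2` for
some `(x,v) ∈ X'` such that `i` belongs to a positive circuit of `G_F(x,v)`. -/
def Tset {n : ℕ} (a b : Fin n → ℤ) (F : (Fin n → ℤ) → Fin n → ℤ) (i : Fin n) : Set ℝ :=
  {t | ∃ x v, InX' a b x v ∧ t = (x i : ℝ) + (v i : ℝ) / 2 ∧
    MemPosCircuit (localGraphT F x v) i}

/-- Edge set of the global interaction graph `𝐆(F)` (without thresholds). -/
def globalGraph {n : ℕ} (a b : Fin n → ℤ) (F : (Fin n → ℤ) → Fin n → ℤ) :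
    Set (SEdge n) :=
  ⋃ (x : Fin n → ℤ) (v : Fin n → ℤ) (_ : InX' a b x v), localGraph F x v

/-- Edge set of the global interaction graph `G(F)` (with thresholds). -/
def globalGraphT {n : ℕ} (a b : Fin n → ℤ) (F : (Fin n → ℤ) → Fin n → ℤ) :
    Set (SEdge n) :=
  ⋃ (x : Fin n → ℤ) (v : Fin n → ℤ) (_ : InX' a b x v), localGraphT F x v

/-- Edge relation of the asynchronous state transition graph `Γ(F)`. -/
def Async {n : ℕ} (F : (Fin n → ℤ) → Fin n → ℤ) (x y : Fin n → ℤ) : Prop :=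
  ∃ i, F x i ≠ x i ∧ y = Function.update x i (x i + (F x i - x i).sign)

/-- A trap domain of `Γ(F)`: a nonempty subset of `X` closed under the
edges of `Γ(F)`. -/
def IsTrapDomain {n : ℕ} (a b : Fin n → ℤ) (F : (Fin n → ℤ) → Fin n → ℤ)
    (A : Set (Fin n → ℤ)) : Prop :=
  A.Nonempty ∧ A ⊆ StateSpace a b ∧ ∀ x ∈ A, ∀ y, Async F x y → y ∈ A

/-- An attractor of `Γ(F)`: a trap domain minimal for inclusion. -/
def IsAttractor {n : ℕ} (a b : Fin n → ℤ) (F : (Fin n → ℤ) → Fin n → ℤ)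
    (A : Set (Fin n → ℤ)) : Prop :=
  IsTrapDomain a b F A ∧ ∀ B, IsTrapDomain a b F B → B ⊆ A → B = A

section Helpers

open Function Set

variable {n : ℕ}

lemma mem_state {a b x : Fin n → ℤ} : x ∈ StateSpace a b ↔ ∀ i, a i ≤ x i ∧ x i ≤ b i :=
  Iff.rfl

lemma bs_helper (u w m e : ℤ)
    (h : (2*u < 2*m + e ∧ 2*m + e < 2*w) ∨ (2*w < 2*m + e ∧ 2*m + e < 2*u)) :
    BothSides (u:ℚ) (w:ℚ) ((m:ℚ) + (e:ℚ)/2) := by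
  have h1 : ∀ s : ℤ, 2*s < 2*m + e → (s:ℚ) < (m:ℚ)+(e:ℚ)/2 := by
    intro s hs
    have : ((2*s:ℤ):ℚ) < ((2*m+e:ℤ):ℚ) := by exact_mod_cast hs
    push_cast at this; linarith
  have h2 : ∀ s : ℤ, 2*m + e < 2*s → (m:ℚ)+(e:ℚ)/2 < (s:ℚ) := by
    intro s hs
    have : ((2*m+e:ℤ):ℚ) < ((2*s:ℤ):ℚ) := by exact_mod_cast hs
    push_cast at this; linarith
  rcases h with ⟨ha,hb⟩|⟨ha,hb⟩
  · exact Or.inl ⟨h1 u ha, h2 w hb⟩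
  · exact Or.inr ⟨h1 w ha, h2 u hb⟩

lemma jac_eq (F : (Fin n → ℤ) → Fin n → ℤ) (x v : Fin n → ℤ) (j k : Fin n)
    (h : v k = 1 ∨ v k = -1) :
    jac F x v j k = (F (Function.update x k (x k + v k)) j - F x j) * v k := by
  unfold jac
  rcases h with h|h <;> rw [h] <;> omega

lemma edge_mem (a b : Fin n → ℤ) (F : (Fin n → ℤ) → Fin n → ℤ)
    (x v : Fin n → ℤ) (k j : Fin n) (s : ℤ)
    (hx : x ∈ StateSpace a b) (hxv : (x + v) ∈ StateSpace a b) (hdir : IsDir v)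
    (hloc : (s = 1 ∧ 0 < jac F x v j k) ∨ (s = -1 ∧ jac F x v j k < 0))
    (hbs : BothSides (F x j) (F (Function.update x k (x k + v k)) j)
      ((x j : ℚ) + (v j : ℚ)/2)) :
    (k, s, j) ∈ globalGraphT a b F := by
  have : (k, s, j) ∈ localGraphT F x v := ⟨hloc, hbs⟩
  simp only [globalGraphT, Set.mem_iUnion]
  exact ⟨x, v, ⟨hx, hdir, hxv⟩, this⟩

end Helpers
section Cross

open Function

variable {n : ℕ}

lemma sum_update_natAbs (x q : Fin n → ℤ) (k : Fin n) (t : ℤ) :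
    (∑ c, (Function.update x k t c - q c).natAbs) + (x k - q k).natAbs
      = (∑ c, (x c - q c).natAbs) + (t - q k).natAbs := by
  classical
  set f : Fin n → ℕ := fun c => (x c - q c).natAbs with hf
  have h1 : ∀ c ∈ Finset.univ, (Function.update x k t c - q c).natAbs
      = Function.update f k (t - q k).natAbs c := by
    intro c _; by_cases hc : c = k
    · subst hc; simp [hf]
    · simp [hc, hf]
  rw [Finset.sum_congr rfl h1, Finset.sum_update_of_mem (Finset.mem_univ k)]
  rw [show Finset.univ \ {k} = Finset.univ.erase k from (Finset.erase_eq _ _).symm]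
  have h2 := Finset.sum_erase_add Finset.univ f (Finset.mem_univ k)
  have h3 : (x k - q k).natAbs = f k := rfl
  have h4 : (∑ c, f c) = Finset.univ.sum f := rfl
  omega

end Cross
section CrossMain

open Function

variable {n : ℕ}

lemma cross (a b : Fin n → ℤ) (hab : ∀ i, a i + 1 ≤ b i)
    (F : (Fin n → ℤ) → Fin n → ℤ) (p q : Fin n → ℤ)
    (hp : ∀ i, a i ≤ p i ∧ p i ≤ b i) (hq : ∀ i, a i ≤ q i ∧ q i ≤ b i)
    (sgn : Fin n → ℤ)
    (hsgn : ∀ j, (p j < q j ∧ sgn j = 1) ∨ (q j < p j ∧ sgn j = -1) ∨ p j = q j)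
    (j : Fin n) (hj : p j ≠ q j)
    (hq3 : 0 ≤ sgn j * (F q j - q j)) :
    ∀ (N : ℕ) (x : Fin n → ℤ), (∑ c, (x c - q c).natAbs) ≤ N →
      (∀ c, (p c ≤ x c ∧ x c ≤ q c) ∨ (q c ≤ x c ∧ x c ≤ p c)) →
      (((∀ c, c ≠ j → x c = p c) ∧ x j ≠ q j ∧ sgn j * (F x j - x j) ≤ 0) ∨
        (x j = q j ∧ sgn j * (F x j - q j) ≤ -1)) →
      ∃ k, p k ≠ q k ∧ (k, sgn k * sgn j, j) ∈ globalGraphT a b F := by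
  have hsj1 : sgn j = 1 ∨ sgn j = -1 := by
    rcases hsgn j with ⟨_, h⟩ | ⟨_, h⟩ | h
    · exact Or.inl h
    · exact Or.inr h
    · exact absurd h hj
  intro N
  induction N with
  | zero =>
    intro x hN hbtw hph
    have hxq : x = q := by
      funext c
      have : (x c - q c).natAbs = 0 := by
        have : (x c - q c).natAbs ≤ ∑ d, (x d - q d).natAbs :=
          Finset.single_le_sum (f := fun d => (x d - q d).natAbs)
            (fun _ _ => Nat.zero_le _) (Finset.mem_univ c)
        omega
      omega
    subst hxq
    rcases hph with ⟨_, hxj, _⟩ | ⟨_, hinv⟩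
    · exact absurd rfl hxj
    · rcases hsj1 with hs | hs <;> rw [hs] at hinv hq3 <;> omega
  | succ N ih =>
    intro x hN hbtw hph
    have hxX : ∀ c, a c ≤ x c ∧ x c ≤ b c := by
      intro c
      have h1 := hp c; have h2 := hq c
      rcases hbtw c with h | h <;> omega
    rcases hph with ⟨hoff, hxj, hinv⟩ | ⟨hxj, hinv⟩
    · -- PHASE 1 : moving coordinate j itself
      set x' := Function.update x j (x j + sgn j) with hx'
      have hx'j : x' j = x j + sgn j := Function.update_self _ _ _
      by_cases hcr : 0 ≤ sgn j * (F x' j - x' j)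
      · -- crossing : emit self-edge at j
        refine ⟨j, hj, ?_⟩
        set v : Fin n → ℤ := fun c => if c = j then sgn j else if x c < b c then 1 else -1
          with hv
        have hvj : v j = sgn j := by simp [hv]
        have hdir : IsDir v := by
          intro c
          by_cases hc : c = j
          · subst hc; rw [hvj]; exact hsj1
          · simp only [hv, if_neg hc]; split <;> simp
        have hbj := hbtw j
        have hxvX : (x + v) ∈ StateSpace a b := by
          intro c
          have hc1 := hxX c; have hc2 := hab c
          simp only [Pi.add_apply]
          by_cases hc : c = j
          · rw [hc, hvj]
            have := hp j; have := hq j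
            rcases hsgn j with ⟨h1, h2⟩ | ⟨h1, h2⟩ | h1
            · rw [h2]; rcases hbj with h | h <;> omega
            · rw [h2]; rcases hbj with h | h <;> omega
            · exact absurd h1 hj
          · simp only [hv, if_neg hc]; split <;> omega
        have hupd : Function.update x j (x j + v j) = x' := by rw [hvj, hx']
        have hjac : jac F x v j j = (F x' j - F x j) * sgn j := by
          rw [jac_eq F x v j j (by rw [hvj]; exact hsj1), hupd, hvj]
        refine edge_mem a b F x v j j (sgn j * sgn j) (fun c => hxX c) hxvX hdir ?_ ?_
        · rw [hjac]
          rw [hx'j] at hcr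
          rcases hsj1 with hs | hs <;> simp only [hs] at hinv hcr ⊢ <;> omega
        · rw [hupd, hvj]
          apply bs_helper (F x j) (F x' j) (x j) (sgn j)
          rw [hx'j] at hcr
          rcases hsj1 with hs | hs <;> simp only [hs] at hinv hcr ⊢ <;> omega
      · -- no crossing : recurse
        push_neg at hcr
        have hinv' : sgn j * (F x' j - x' j) ≤ -1 := by omega
        have hbj := hbtw j
        have hsx : (p j < q j ∧ sgn j = 1) ∨ (q j < p j ∧ sgn j = -1) := by
          rcases hsgn j with h | h | h
          · exact Or.inl h
          · exact Or.inr h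
          · exact absurd h hj
        apply ih x'
        · have hd := sum_update_natAbs x q j (x j + sgn j)
          have hstep : (x j + sgn j - q j).natAbs + 1 = (x j - q j).natAbs := by
            rcases hsx with ⟨h1, h2⟩ | ⟨h1, h2⟩ <;> rw [h2] <;>
              rcases hbj with h | h <;> omega
          simp only [hx']
          omega
        · intro c
          by_cases hc : c = j
          · subst hc
            rw [hx'j]
            rcases hsx with ⟨h1, h2⟩ | ⟨h1, h2⟩ <;> rw [h2] <;> rcases hbj with h | h <;>
              [left; left; right; right] <;> omega
          · rw [hx', Function.update_of_ne hc]; exact hbtw c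
        · by_cases hxq : x j + sgn j = q j
          · right
            constructor
            · rw [hx'j, hxq]
            · rw [← hxq]; rw [hx'j] at hinv'; exact hinv'
          · left
            refine ⟨fun c hc => by rw [hx', Function.update_of_ne hc]; exact hoff c hc,
              by rw [hx'j]; exact hxq, le_trans hinv' (by norm_num)⟩
    · -- PHASE 2 : moving some other coordinate toward q
      by_cases hxeq : x = q
      · subst hxeq
        exfalso
        rcases hsj1 with hs | hs <;> rw [hs] at hinv hq3 <;> omega
      · have hk : ∃ k, x k ≠ q k := by
          by_contra h; push_neg at h; exact hxeq (funext h)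
        obtain ⟨k, hk⟩ := hk
        have hkj : k ≠ j := by intro h; subst h; exact hk hxj
        have hpk : p k ≠ q k := by
          intro h
          have := hbtw k
          omega
        have hsk1 : sgn k = 1 ∨ sgn k = -1 := by
          rcases hsgn k with ⟨_, h⟩ | ⟨_, h⟩ | h
          · exact Or.inl h
          · exact Or.inr h
          · exact absurd h hpk
        have hsk : (p k < q k ∧ sgn k = 1) ∨ (q k < p k ∧ sgn k = -1) := by
          rcases hsgn k with h | h | h
          · exact Or.inl h
          · exact Or.inr h
          · exact absurd h hpk
        have hsx : (p j < q j ∧ sgn j = 1) ∨ (q j < p j ∧ sgn j = -1) := by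
          rcases hsgn j with h | h | h
          · exact Or.inl h
          · exact Or.inr h
          · exact absurd h hj
        have hbk := hbtw k
        have hbj := hbtw j
        set x' := Function.update x k (x k + sgn k) with hx'
        have hx'k : x' k = x k + sgn k := Function.update_self _ _ _
        have hx'j : x' j = x j := Function.update_of_ne (Ne.symm hkj) _ _
        by_cases hcr : 0 ≤ sgn j * (F x' j - q j)
        · -- crossing : emit edge (k, sgn k * sgn j, j)
          refine ⟨k, hpk, ?_⟩
          set v : Fin n → ℤ := fun c =>
            if c = k then sgn k else if c = j then -sgn j else if x c < b c then 1 else -1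
            with hv
          have hvk : v k = sgn k := by simp [hv]
          have hvj : v j = -sgn j := by
            simp only [hv]
            rw [if_neg (Ne.symm hkj)]
            simp
          have hdir : IsDir v := by
            intro c
            by_cases hc : c = k
            · subst hc; rw [hvk]; exact hsk1
            · by_cases hc2 : c = j
              · subst hc2; rw [hvj]
                rcases hsj1 with h | h <;> rw [h] <;> simp
              · simp only [hv, if_neg hc, if_neg hc2]; split <;> simp
          have hxvX : (x + v) ∈ StateSpace a b := by
            intro c
            have hc1 := hxX c; have hc2 := hab c
            simp only [Pi.add_apply]
            by_cases hc : c = k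
            · rw [hc, hvk]
              have := hp k; have := hq k
              rcases hsk with ⟨h1, h2⟩ | ⟨h1, h2⟩ <;> rw [h2] <;> rcases hbk with h | h <;> omega
            · by_cases hc2 : c = j
              · rw [hc2, hvj]
                have := hp j; have := hq j
                rcases hsx with ⟨h1, h2⟩ | ⟨h1, h2⟩ <;> rw [h2] <;> rcases hbj with h | h <;> omega
              · simp only [hv, if_neg hc, if_neg hc2]; split <;> omega
          have hupd : Function.update x k (x k + v k) = x' := by rw [hvk, hx']
          have hjac : jac F x v j k = (F x' j - F x j) * sgn k := by
            rw [jac_eq F x v j k (by rw [hvk]; exact hsk1), hupd, hvk]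
          refine edge_mem a b F x v k j (sgn k * sgn j) (fun c => hxX c) hxvX hdir ?_ ?_
          · rw [hjac]
            rcases hsk1 with hs | hs <;> rcases hsj1 with hs' | hs' <;>
              simp only [hs, hs'] at hinv hcr ⊢ <;> omega
          · rw [hupd, hvj]
            apply bs_helper (F x j) (F x' j) (x j) (-sgn j)
            rw [hxj]
            rcases hsj1 with hs | hs <;> simp only [hs] at hinv hcr ⊢ <;> omega
        · -- no crossing : recurse
          push_neg at hcr
          have hinv' : sgn j * (F x' j - q j) ≤ -1 := by omega
          apply ih x'
          · have hd := sum_update_natAbs x q k (x k + sgn k)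
            have hstep : (x k + sgn k - q k).natAbs + 1 = (x k - q k).natAbs := by
              rcases hsk with ⟨h1, h2⟩ | ⟨h1, h2⟩ <;> rw [h2] <;>
                rcases hbk with h | h <;> omega
            simp only [hx']
            omega
          · intro c
            by_cases hc : c = k
            · subst hc
              rw [hx'k]
              rcases hsk with ⟨h1, h2⟩ | ⟨h1, h2⟩ <;> rw [h2] <;> rcases hbk with h | h <;>
                [left; left; right; right] <;> omega
            · rw [hx', Function.update_of_ne hc]; exact hbtw c
          · right
            exact ⟨by rw [hx'j]; exact hxj, hinv'⟩

end CrossMain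
section MainLemma

open Function

variable {n : ℕ}

lemma natAbs_sum_comm (x y : Fin n → ℤ) :
    (∑ c, (x c - y c).natAbs) = ∑ c, (y c - x c).natAbs :=
  Finset.sum_congr rfl (fun c _ => by omega)

lemma main_lemma (a b : Fin n → ℤ) (hab : ∀ i, a i + 1 ≤ b i)
    (F : (Fin n → ℤ) → Fin n → ℤ) (I : Finset (Fin n))
    (hI : IsPFVS (globalGraphT a b F) I)
    (P Q : Set (Fin n → ℤ))
    (hPX : P ⊆ StateSpace a b) (hQX : Q ⊆ StateSpace a b)
    (hPne : P.Nonempty) (hQne : Q.Nonempty)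
    (hPcl : ∀ x ∈ P, ∀ j, j ∉ I → F x j ≠ x j →
      Function.update x j (x j + (F x j - x j).sign) ∈ P)
    (hQcl : ∀ x ∈ Q, ∀ j, j ∉ I → F x j ≠ x j →
      Function.update x j (x j + (F x j - x j).sign) ∈ Q)
    (hslice : ∀ x ∈ P, ∀ y ∈ Q, ∀ i ∈ I, x i = y i)
    (hdisj : ∀ x, x ∈ P → x ∉ Q) : False := by
  classical
  -- a distance-minimizing pair
  set S : Set ℕ := {m | ∃ x ∈ P, ∃ y ∈ Q, (∑ c, (x c - y c).natAbs) = m} with hS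
  obtain ⟨x₀, hx₀⟩ := hPne
  obtain ⟨y₀, hy₀⟩ := hQne
  have hSne : S.Nonempty := ⟨_, x₀, hx₀, y₀, hy₀, rfl⟩
  obtain ⟨p, hp, q, hq, hpq⟩ := Nat.sInf_mem hSne
  have hmin : ∀ x ∈ P, ∀ y ∈ Q, sInf S ≤ ∑ c, (x c - y c).natAbs :=
    fun x hx y hy => Nat.sInf_le ⟨x, hx, y, hy, rfl⟩
  have hpX : ∀ i, a i ≤ p i ∧ p i ≤ b i := hPX hp
  have hqX : ∀ i, a i ≤ q i ∧ q i ≤ b i := hQX hq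
  set sgn : Fin n → ℤ := fun j => if p j < q j then 1 else -1 with hsgn_def
  have hsgn : ∀ j, (p j < q j ∧ sgn j = 1) ∨ (q j < p j ∧ sgn j = -1) ∨ p j = q j := by
    intro j
    rcases lt_trichotomy (p j) (q j) with h | h | h
    · exact Or.inl ⟨h, if_pos h⟩
    · exact Or.inr (Or.inr h)
    · exact Or.inr (Or.inl ⟨h, if_neg (by omega)⟩)
  have hsgn_pm : ∀ j, sgn j = 1 ∨ sgn j = -1 := by
    intro j; simp only [hsgn_def]; split <;> simp
  have hIag : ∀ i ∈ I, p i = q i := fun i hi => hslice p hp q hq i hi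
  -- minimality: F does not point from p towards q on disagreeing coordinates
  have hstep3p : ∀ j, p j ≠ q j → sgn j * (F p j - p j) ≤ 0 := by
    intro j hj
    by_contra hcon
    push_neg at hcon
    have hjI : j ∉ I := fun h => hj (hIag j h)
    have hsj : (p j < q j ∧ sgn j = 1) ∨ (q j < p j ∧ sgn j = -1) := by
      rcases hsgn j with h | h | h
      · exact Or.inl h
      · exact Or.inr h
      · exact absurd h hj
    have hFne : F p j ≠ p j := by
      rcases hsj with ⟨h1, h2⟩ | ⟨h1, h2⟩ <;> rw [h2] at hcon <;> omega
    have hsign : (F p j - p j).sign = sgn j := by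
      rcases hsj with ⟨h1, h2⟩ | ⟨h1, h2⟩ <;> rw [h2] at hcon ⊢
      · exact Int.sign_eq_one_of_pos (by omega)
      · exact Int.sign_eq_neg_one_of_neg (by omega)
    have hp' : Function.update p j (p j + sgn j) ∈ P := by
      rw [← hsign]; exact hPcl p hp j hjI hFne
    have hd := sum_update_natAbs p q j (p j + sgn j)
    have hstep : (p j + sgn j - q j).natAbs + 1 = (p j - q j).natAbs := by
      rcases hsj with ⟨h1, h2⟩ | ⟨h1, h2⟩ <;> rw [h2] <;> omega
    have hm := hmin _ hp' q hq
    omega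
  have hstep3q : ∀ j, p j ≠ q j → 0 ≤ sgn j * (F q j - q j) := by
    intro j hj
    by_contra hcon
    push_neg at hcon
    have hjI : j ∉ I := fun h => hj (hIag j h)
    have hsj : (p j < q j ∧ sgn j = 1) ∨ (q j < p j ∧ sgn j = -1) := by
      rcases hsgn j with h | h | h
      · exact Or.inl h
      · exact Or.inr h
      · exact absurd h hj
    have hFne : F q j ≠ q j := by
      rcases hsj with ⟨h1, h2⟩ | ⟨h1, h2⟩ <;> rw [h2] at hcon <;> omega
    have hsign : (F q j - q j).sign = -sgn j := by
      rcases hsj with ⟨h1, h2⟩ | ⟨h1, h2⟩ <;> rw [h2] at hcon ⊢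
      · exact Int.sign_eq_neg_one_of_neg (by omega)
      · simp only [neg_neg]; exact Int.sign_eq_one_of_pos (by omega)
    have hq' : Function.update q j (q j + -sgn j) ∈ Q := by
      rw [← hsign]; exact hQcl q hq j hjI hFne
    have hd := sum_update_natAbs q p j (q j + -sgn j)
    have hstep : (q j + -sgn j - p j).natAbs + 1 = (q j - p j).natAbs := by
      rcases hsj with ⟨h1, h2⟩ | ⟨h1, h2⟩ <;> rw [h2] <;> omega
    have hm := hmin p hp _ hq'
    rw [natAbs_sum_comm p (Function.update q j (q j + -sgn j))] at hm
    rw [natAbs_sum_comm p q] at hpq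
    omega
  -- an in-edge for every disagreeing vertex
  have hedge : ∀ j, p j ≠ q j →
      ∃ k, p k ≠ q k ∧ (k, sgn k * sgn j, j) ∈ globalGraphT a b F := by
    intro j hj
    refine cross a b hab F p q hpX hqX sgn hsgn j hj (hstep3q j hj)
      (∑ c, (p c - q c).natAbs) p le_rfl ?_ ?_
    · intro c
      rcases hsgn c with ⟨h, _⟩ | ⟨h, _⟩ | h
      · exact Or.inl ⟨le_rfl, le_of_lt h⟩
      · exact Or.inr ⟨le_of_lt h, le_rfl⟩
      · exact Or.inl ⟨le_rfl, le_of_eq h⟩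
    · exact Or.inl ⟨fun c _ => rfl, hj, hstep3p j hj⟩
  -- choose a predecessor function
  have hgex : ∀ j, ∃ k, (p j ≠ q j →
      (p k ≠ q k ∧ (k, sgn k * sgn j, j) ∈ globalGraphT a b F)) ∧ (p j = q j → k = j) := by
    intro j
    by_cases hj : p j ≠ q j
    · obtain ⟨k, h1, h2⟩ := hedge j hj
      exact ⟨k, fun _ => ⟨h1, h2⟩, fun h => absurd h hj⟩
    · push_neg at hj
      exact ⟨j, fun h => absurd hj h, fun _ => rfl⟩
  choose g hg using hgex
  have hgD : ∀ j, p j ≠ q j → p (g j) ≠ q (g j) := fun j hj => ((hg j).1 hj).1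
  have hgE : ∀ j, p j ≠ q j → (g j, sgn (g j) * sgn j, j) ∈ globalGraphT a b F :=
    fun j hj => ((hg j).1 hj).2
  -- a starting disagreeing vertex
  have hpq_ne : p ≠ q := fun h => hdisj p hp (h ▸ hq)
  obtain ⟨j₀, hj₀⟩ : ∃ j, p j ≠ q j := by
    by_contra h; push_neg at h; exact hpq_ne (funext h)
  have hiter : ∀ (t : ℕ) (j), p j ≠ q j → p (g^[t] j) ≠ q (g^[t] j) := by
    intro t
    induction t with
    | zero => intro j h; simpa using h
    | succ t iht =>
      intro j h
      rw [Function.iterate_succ_apply]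
      exact iht (g j) (hgD j h)
  -- find a periodic point of g
  obtain ⟨t1, t2, hne, heq⟩ :=
    Finite.exists_ne_map_eq_of_infinite (fun t : ℕ => g^[t] j₀)
  have hex : ∃ s r0, 0 < r0 ∧ g^[r0] (g^[s] j₀) = g^[s] j₀ := by
    rcases lt_or_gt_of_ne hne with h | h
    · refine ⟨t1, t2 - t1, by omega, ?_⟩
      rw [← Function.iterate_add_apply, show t2 - t1 + t1 = t2 from by omega]
      exact heq.symm
    · refine ⟨t2, t1 - t2, by omega, ?_⟩
      rw [← Function.iterate_add_apply, show t1 - t2 + t2 = t1 from by omega]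
      exact heq
  obtain ⟨s, r0, hr0pos, hper0⟩ := hex
  set j₁ := g^[s] j₀ with hj₁def
  have hj₁D : p j₁ ≠ q j₁ := hiter s j₀ hj₀
  set RS : Set ℕ := {r | 0 < r ∧ g^[r] j₁ = j₁} with hRS
  have hRSne : RS.Nonempty := ⟨r0, hr0pos, hper0⟩
  obtain ⟨hrpos, hper⟩ := Nat.sInf_mem hRSne
  set r := sInf RS with hrdef
  have hrmin : ∀ m, 0 < m → g^[m] j₁ = j₁ → r ≤ m := fun m h1 h2 => Nat.sInf_le ⟨h1, h2⟩
  have hinj1 : ∀ s' t', 1 ≤ s' → s' ≤ r → 1 ≤ t' → t' ≤ r →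
      g^[s'] j₁ = g^[t'] j₁ → s' = t' := by
    have key : ∀ s' t', 0 < s' → s' < t' → t' ≤ r → g^[s'] j₁ = g^[t'] j₁ → False := by
      intro s' t' h1 h2 h3 h4
      have h5 : g^[r - t' + s'] j₁ = j₁ := by
        rw [Function.iterate_add_apply, h4, ← Function.iterate_add_apply,
          show r - t' + t' = r from by omega]
        exact hper
      have := hrmin (r - t' + s') (by omega) h5
      omega
    intro s' t' h1 h2 h3 h4 h5
    rcases lt_trichotomy s' t' with h | h | h
    · exact absurd h5 (fun hh => key s' t' (by omega) h (by omega) hh)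
    · exact h
    · exact absurd h5.symm (fun hh => key t' s' (by omega) h (by omega) hh)
  obtain ⟨m, hm⟩ : ∃ m, r = m + 1 := ⟨r - 1, by omega⟩
  -- the circuit
  set u : Fin (m + 1) → Fin n := fun t => g^[m - (t : ℕ)] j₁ with hu
  set E : Fin (m + 1) → SEdge n := fun t => (g (u t), sgn (g (u t)) * sgn (u t), u t) with hE
  set c : List (SEdge n) := List.ofFn E with hc
  have hlen : c.length = m + 1 := by rw [hc, List.length_ofFn]
  have huD : ∀ t : Fin (m + 1), p (u t) ≠ q (u t) := fun t => hiter _ _ hj₁D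
  have hcirc : IsCircuit (globalGraphT a b F) c := by
    refine ⟨?_, ?_, ?_, ?_, ?_⟩
    · intro h
      have := congrArg List.length h
      rw [hlen] at this
      simp at this
    · intro e he
      rw [hc, List.mem_ofFn] at he
      obtain ⟨t, rfl⟩ := he
      exact hgE (u t) (huD t)
    · intro k hk
      rw [hlen] at hk
      rw [List.get_eq_getElem, List.get_eq_getElem]
      simp only [hc]
      rw [List.getElem_ofFn, List.getElem_ofFn]
      show u _ = g (u _)
      simp only [hu]
      rw [← Function.iterate_succ_apply' g]
      congr 1
      omega
    · have h1 : c.getLast? = some (E ⟨m, by omega⟩) := by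
        rw [List.getLast?_eq_getElem?, hlen]
        simp only [hc]
        rw [List.getElem?_ofFn]
        simp [List.ofFnNthVal]
      have h2 : c.head? = some (E ⟨0, by omega⟩) := by
        rw [List.head?_eq_getElem?]
        simp only [hc]
        rw [List.getElem?_ofFn]
        simp [List.ofFnNthVal]
      rw [h1, h2]
      simp only [Option.map_some]
      congr 1
      have hu_last : u ⟨m, by omega⟩ = j₁ := by
        simp only [hu, Fin.val_mk, Nat.sub_self, Function.iterate_zero_apply]
      have hu_zero : g (u ⟨0, by omega⟩) = j₁ := by
        simp only [hu, Fin.val_mk, Nat.sub_zero]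
        rw [← Function.iterate_succ_apply' g]
        have hfin : g^[m + 1] j₁ = j₁ := by rw [← hm]; exact hper
        exact hfin
      show u _ = g (u _)
      rw [hu_last, hu_zero]
    · rw [hc, List.map_ofFn]
      rw [List.nodup_ofFn]
      intro t t' htt
      simp only [Function.comp_apply, hE] at htt
      have ht1 : g (u t) = g^[m - (t : ℕ) + 1] j₁ := by
        simp only [hu]; rw [← Function.iterate_succ_apply' g]
      have ht2 : g (u t') = g^[m - (t' : ℕ) + 1] j₁ := by
        simp only [hu]; rw [← Function.iterate_succ_apply' g]
      rw [ht1, ht2] at htt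
      have h1 := hinj1 (m - (t : ℕ) + 1) (m - (t' : ℕ) + 1) (by omega)
        (by omega) (by omega) (by omega) htt
      have h2 : (t : ℕ) ≤ m := by omega
      have h3 : (t' : ℕ) ≤ m := by omega
      apply Fin.ext
      omega
  have hposc : 0 < (c.map (fun e => e.2.1)).prod := by
    set W : ℕ → ℤ := fun s' => sgn (g^[s'] j₁) with hW
    have hprod : (c.map (fun e => e.2.1)).prod
        = ∏ t ∈ Finset.range (m + 1), (W (t + 1) * W t) := by
      rw [hc, List.map_ofFn, List.prod_ofFn]
      simp only [Function.comp_apply]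
      have h1 : ∀ t : Fin (m + 1),
          (E t).2.1 = W (m - (t : ℕ) + 1) * W (m - (t : ℕ)) := by
        intro t
        show sgn (g (u t)) * sgn (u t) = _
        simp only [hW, hu]
        rw [← Function.iterate_succ_apply' g]
      rw [Finset.prod_congr rfl (fun t _ => h1 t)]
      rw [Fin.prod_univ_eq_prod_range (fun s' => W (m - s' + 1) * W (m - s')) (m + 1)]
      refine Eq.trans ?_ (Finset.prod_range_reflect (fun s' => W (s' + 1) * W s') (m + 1))
      apply Finset.prod_congr rfl
      intro i hi
      rw [Finset.mem_range] at hi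
      rw [show m - i = m + 1 - 1 - i from by omega]
    have hWpm : ∀ s', W s' = 1 ∨ W s' = -1 := fun s' => hsgn_pm _
    have hWne : ∀ s', W s' ≠ 0 := by
      intro s'; rcases hWpm s' with h | h <;> rw [h] <;> norm_num
    have hsplit : ∏ t ∈ Finset.range (m + 1), (W (t + 1) * W t)
        = (∏ t ∈ Finset.range (m + 1), W (t + 1)) * ∏ t ∈ Finset.range (m + 1), W t :=
      Finset.prod_mul_distrib
    have hWlast : W (m + 1) = W 0 := by
      simp only [hW, Function.iterate_zero_apply]
      rw [← hm, hper]
    have hshift : ∏ t ∈ Finset.range (m + 1), W (t + 1)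
        = ∏ t ∈ Finset.range (m + 1), W t := by
      have e1 := Finset.prod_range_succ' W (m + 1)
      have e2 := Finset.prod_range_succ W (m + 1)
      rw [e2, hWlast] at e1
      exact mul_right_cancel₀ (hWne 0) e1.symm
    rw [hprod, hsplit, hshift]
    have : (∏ t ∈ Finset.range (m + 1), W t) ≠ 0 :=
      Finset.prod_ne_zero_iff.2 (fun t _ => hWne t)
    exact mul_self_pos.mpr this
  obtain ⟨i, hiI, hiC⟩ := hI c ⟨hcirc, hposc⟩
  rw [hc, List.map_ofFn, List.mem_ofFn] at hiC
  obtain ⟨t, ht⟩ := hiC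
  have : p i ≠ q i := by
    rw [← ht]
    exact hgD (u t) (huD t)
  exact this (hIag i hiI)

end MainLemma
section Final

open Function Set

variable {n : ℕ}

lemma stateSpace_finite (a b : Fin n → ℤ) : (StateSpace a b).Finite := by
  classical
  apply Set.Finite.subset (Fintype.piFinset (fun i => Finset.Icc (a i) (b i))).finite_toSet
  intro x hx
  simp only [Finset.mem_coe, Fintype.mem_piFinset, Finset.mem_Icc]
  exact hx

lemma attractors_finite (a b : Fin n → ℤ) (F : (Fin n → ℤ) → Fin n → ℤ) :
    {A | IsAttractor a b F A}.Finite :=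
  Set.Finite.subset (Set.Finite.finite_subsets (stateSpace_finite a b))
    (fun _ hA => hA.1.2.1)

lemma attractor_eq {a b : Fin n → ℤ} {F : (Fin n → ℤ) → Fin n → ℤ}
    {A B : Set (Fin n → ℤ)} (hA : IsAttractor a b F A)
    (hB : IsAttractor a b F B) (hne : (A ∩ B).Nonempty) : A = B := by
  have hT : IsTrapDomain a b F (A ∩ B) :=
    ⟨hne, fun x hx => hA.1.2.1 hx.1,
      fun x hx y hxy => ⟨hA.1.2.2 x hx.1 y hxy, hB.1.2.2 x hx.2 y hxy⟩⟩
  have h1 := hA.2 _ hT Set.inter_subset_left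
  have h2 := hB.2 _ hT Set.inter_subset_right
  exact h1.symm.trans h2

lemma fixed_attractor {a b : Fin n → ℤ} {F : (Fin n → ℤ) → Fin n → ℤ}
    {x : Fin n → ℤ} (hx : x ∈ StateSpace a b) (hfx : F x = x) :
    IsAttractor a b F {x} := by
  constructor
  · refine ⟨⟨x, rfl⟩, by simpa using hx, ?_⟩
    intro y hy z hz
    obtain ⟨i, hi, _⟩ := hz
    rw [Set.mem_singleton_iff] at hy
    subst hy
    exact absurd (congrFun hfx i) hi
  · intro B hB hBsub
    obtain ⟨y, hy⟩ := hB.1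
    have hyx : y = x := hBsub hy
    apply Set.Subset.antisymm hBsub
    intro z hz
    rw [Set.mem_singleton_iff] at hz
    subst hz
    rw [← hyx]
    exact hy

end Final
/-- If `I` is a positive feedback vertex set of the global interaction
graph `G(F)`, then `Γ(F)` has at most `∏_{i ∈ I} |X_i|` attractors; in
particular `F` has at most `∏_{i ∈ I} |X_i|` fixed points. -/
theorem stmt5 {n : ℕ} (a b : Fin n → ℤ) (hab : ∀ i, a i + 1 ≤ b i)
    (F : (Fin n → ℤ) → Fin n → ℤ)
    (hF : ∀ x ∈ StateSpace a b, F x ∈ StateSpace a b)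
    (I : Finset (Fin n))
    (hI : IsPFVS (globalGraphT a b F) I) :
    {A | IsAttractor a b F A}.ncard ≤ ∏ i ∈ I, (b i - a i + 1).toNat ∧
    {x ∈ StateSpace a b | F x = x}.ncard ≤ ∏ i ∈ I, (b i - a i + 1).toNat := by
  classical
  set Z : Finset (Fin n → ℤ) :=
    Fintype.piFinset (fun i => if i ∈ I then Finset.Icc (a i) (b i) else {a i}) with hZ
  have hZcard : Z.card = ∏ i ∈ I, (b i - a i + 1).toNat := by
    rw [hZ, Fintype.card_piFinset]
    have h1 : ∀ i : Fin n,
        (if i ∈ I then Finset.Icc (a i) (b i) else ({a i} : Finset ℤ)).card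
          = if i ∈ I then (b i - a i + 1).toNat else 1 := by
      intro i
      split
      · rw [Int.card_Icc]; congr 1; omega
      · simp
    rw [Finset.prod_congr rfl (fun i _ => h1 i), Finset.prod_ite_mem Finset.univ I
      (fun i => (b i - a i + 1).toNat), Finset.univ_inter]
  set φ : Set (Fin n → ℤ) → (Fin n → ℤ) := fun A =>
    fun i => if i ∈ I then (if h : A.Nonempty then h.some i else a i) else a i with hφ
  have hφmem : ∀ A, IsAttractor a b F A → φ A ∈ Z := by
    intro A hA
    rw [hZ, Fintype.mem_piFinset]
    intro i
    simp only [hφ]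
    by_cases hi : i ∈ I
    · rw [if_pos hi, if_pos hi, dif_pos hA.1.1]
      have hmem := hA.1.2.1 hA.1.1.some_mem
      exact Finset.mem_Icc.2 (hmem i)
    · rw [if_neg hi, if_neg hi]
      exact Finset.mem_singleton_self _
  have hinj : Set.InjOn φ {A | IsAttractor a b F A} := by
    intro A hA B hB hAB
    rw [Set.mem_setOf_eq] at hA hB
    by_contra hne
    have hABdisj : ∀ x, x ∈ A → x ∉ B := by
      intro x hxA hxB
      exact hne (attractor_eq hA hB ⟨x, hxA, hxB⟩)
    have hAne := hA.1.1
    have hBne := hB.1.1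
    have hIag : ∀ i ∈ I, hAne.some i = hBne.some i := by
      intro i hi
      have h := congrFun hAB i
      simp only [hφ, if_pos hi, dif_pos hAne, dif_pos hBne] at h
      exact h
    refine main_lemma a b hab F I hI
      {y | y ∈ A ∧ ∀ i ∈ I, y i = hAne.some i}
      {y | y ∈ B ∧ ∀ i ∈ I, y i = hBne.some i}
      (fun y hy => hA.1.2.1 hy.1) (fun y hy => hB.1.2.1 hy.1)
      ⟨hAne.some, hAne.some_mem, fun i _ => rfl⟩
      ⟨hBne.some, hBne.some_mem, fun i _ => rfl⟩ ?_ ?_ ?_ ?_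
    · intro x hx j hjI hFj
      refine ⟨hA.1.2.2 x hx.1 _ ⟨j, hFj, rfl⟩, ?_⟩
      intro i hi
      rw [Function.update_of_ne (by rintro rfl; exact hjI hi)]
      exact hx.2 i hi
    · intro x hx j hjI hFj
      refine ⟨hB.1.2.2 x hx.1 _ ⟨j, hFj, rfl⟩, ?_⟩
      intro i hi
      rw [Function.update_of_ne (by rintro rfl; exact hjI hi)]
      exact hx.2 i hi
    · intro x hx y hy i hi
      rw [hx.2 i hi, hy.2 i hi, hIag i hi]
    · intro x hx hxQ
      exact hABdisj x hx.1 hxQ.1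
  have hcard1 : {A | IsAttractor a b F A}.ncard ≤ ∏ i ∈ I, (b i - a i + 1).toNat := by
    have h := Set.ncard_le_ncard_of_injOn (s := {A | IsAttractor a b F A})
      (t := (↑Z : Set (Fin n → ℤ))) φ (fun A hA => hφmem A hA) hinj Z.finite_toSet
    rw [Set.ncard_coe_finset] at h
    rw [← hZcard]
    exact h
  refine ⟨hcard1, ?_⟩
  have h2 : {x ∈ StateSpace a b | F x = x}.ncard ≤ {A | IsAttractor a b F A}.ncard := by
    exact Set.ncard_le_ncard_of_injOn (s := {x ∈ StateSpace a b | F x = x})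
      (t := {A | IsAttractor a b F A}) (fun x => ({x} : Set (Fin n → ℤ)))
      (fun x hx => fixed_attractor hx.1 hx.2)
      (fun x _ y _ h => by simpa using h)
      (attractors_finite a b F)
  exact le_trans h2 hcard1
end

section
/- Let X = ∏_{i=1}^n X_i be a product of n finite intervals of integers, each of cardinality at least 2, let F = (f_1,…,f_n) be a map from X to itself, and let Y be a subinterval of X_1. Define F̃ = (f̃_1,…,f̃_n) : X → X by f̃_i = f_i for i > 1 and f̃_1(x) = min(Y) if f_1(x) < min(Y), f̃_1(x) = f_1(x) if f_1(x) ∈ Y, and f̃_1(x) = max(Y) if f_1(x) > max(Y). Then for every (x,v) ∈ X', the local interaction graph with thresholds G_{F̃}(x,v) is a subgraph of G_F(x,v); consequently T_i(G_{F̃}) ⊆ T_i(G_F) for every i ∈ {1,…,n}. -/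
/-- The map `F̃` obtained from `F` by clamping the first component into
the subinterval `Y = [c, d]` of `X_1`. -/
def clampFirst {n : ℕ} (i0 : Fin n) (c d : ℤ) (F : (Fin n → ℤ) → Fin n → ℤ) :
    (Fin n → ℤ) → Fin n → ℤ :=
  fun x i => if i = i0 then
      (if F x i0 < c then c else if d < F x i0 then d else F x i0)
    else F x i

private lemma jac_sign (A B w : ℤ) (hw : w = 1 ∨ w = -1)
    (hs : (0 < A ∧ 0 < B) ∨ (A < 0 ∧ B < 0)) :
    (0 < A / w ↔ 0 < B / w) ∧ (A / w < 0 ↔ B / w < 0) := by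
  rcases hw with rfl | rfl <;> omega

private lemma clamp_lt_aux (c d p q : ℤ) (hcd : c ≤ d)
    (h : (if p < c then c else if d < p then d else p) <
         (if q < c then c else if d < q then d else q)) :
    p ≤ (if p < c then c else if d < p then d else p) ∧
    (if q < c then c else if d < q then d else q) ≤ q ∧ p < q := by
  split_ifs at h ⊢ <;> omega

private lemma subgraphT {n : ℕ} (i0 : Fin n) (c d : ℤ) (hcd : c ≤ d)
    (F : (Fin n → ℤ) → Fin n → ℤ) (x v : Fin n → ℤ) (hv : IsDir v) :
    localGraphT (clampFirst i0 c d F) x v ⊆ localGraphT F x v := by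
  rintro ⟨j, s, i⟩ ⟨hloc, hbs⟩
  by_cases hi : i = i0
  · subst hi
    simp only [localGraph, localGraphT, jac, clampFirst, Set.mem_setOf_eq, if_pos rfl]
      at hloc hbs ⊢
    set p := F x i with hp
    set q := F (Function.update x j (x j + v j)) i with hq
    set t : ℚ := (x i : ℚ) + (v i : ℚ) / 2 with ht
    rcases hbs with ⟨h1, h2⟩ | ⟨h1, h2⟩
    · have hgg : (if p < c then c else if d < p then d else p) <
          (if q < c then c else if d < q then d else q) := by exact_mod_cast h1.trans h2
      obtain ⟨hp1, hq1, hpq⟩ := clamp_lt_aux c d p q hcd hgg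
      have hsg := jac_sign (q - p)
        ((if q < c then c else if d < q then d else q) -
         (if p < c then c else if d < p then d else p)) (v j) (hv j)
        (Or.inl ⟨by omega, by omega⟩)
      refine ⟨?_, Or.inl ⟨?_, ?_⟩⟩
      · rcases hloc with ⟨hs1, hs2⟩ | ⟨hs1, hs2⟩
        · exact Or.inl ⟨hs1, hsg.1.2 hs2⟩
        · exact Or.inr ⟨hs1, hsg.2.2 hs2⟩
      · calc (p : ℚ) ≤ _ := by exact_mod_cast hp1
          _ < t := h1
      · calc t < _ := h2
          _ ≤ (q : ℚ) := by exact_mod_cast hq1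
    · have hgg : (if q < c then c else if d < q then d else q) <
          (if p < c then c else if d < p then d else p) := by exact_mod_cast h1.trans h2
      obtain ⟨hq1, hp1, hqp⟩ := clamp_lt_aux c d q p hcd hgg
      have hsg := jac_sign (q - p)
        ((if q < c then c else if d < q then d else q) -
         (if p < c then c else if d < p then d else p)) (v j) (hv j)
        (Or.inr ⟨by omega, by omega⟩)
      refine ⟨?_, Or.inr ⟨?_, ?_⟩⟩
      · rcases hloc with ⟨hs1, hs2⟩ | ⟨hs1, hs2⟩
        · exact Or.inl ⟨hs1, hsg.1.2 hs2⟩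
        · exact Or.inr ⟨hs1, hsg.2.2 hs2⟩
      · calc (q : ℚ) ≤ _ := by exact_mod_cast hq1
          _ < t := h1
      · calc t < _ := h2
          _ ≤ (p : ℚ) := by exact_mod_cast hp1
  · have heq : ∀ y, clampFirst i0 c d F y i = F y i := fun y => if_neg hi
    simp only [localGraph, localGraphT, jac, Set.mem_setOf_eq, heq] at hloc hbs ⊢
    exact ⟨hloc, hbs⟩

private lemma memPos_mono {n : ℕ} {E E' : Set (SEdge n)} (h : E ⊆ E') {i : Fin n} :
    MemPosCircuit E i → MemPosCircuit E' i := by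
  rintro ⟨cc, ⟨⟨hne, hE, hcons, hcl, hnd⟩, hpos⟩, hi⟩
  exact ⟨cc, ⟨⟨hne, fun e he => h (hE e he), hcons, hcl, hnd⟩, hpos⟩, hi⟩

/-- `G_{F̃}(x,v)` is a subgraph of `G_F(x,v)`, and consequently
`T_i(G_{F̃}) ⊆ T_i(G_F)` for every `i`. -/
theorem stmt14 {n : ℕ} (hn : 0 < n) (a b : Fin n → ℤ) (hab : ∀ i, a i + 1 ≤ b i)
    (F : (Fin n → ℤ) → Fin n → ℤ)
    (hF : ∀ x ∈ StateSpace a b, F x ∈ StateSpace a b)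
    (c d : ℤ) (hc : a ⟨0, hn⟩ ≤ c) (hcd : c ≤ d) (hd : d ≤ b ⟨0, hn⟩) :
    (∀ x v, InX' a b x v →
      localGraphT (clampFirst ⟨0, hn⟩ c d F) x v ⊆ localGraphT F x v) ∧
    ∀ i : Fin n, Tset a b (clampFirst ⟨0, hn⟩ c d F) i ⊆ Tset a b F i := by
  refine ⟨fun x v hxv => subgraphT _ c d hcd F x v hxv.2.1, fun i t ht => ?_⟩
  obtain ⟨x, v, hxv, ht', hmem⟩ := ht
  exact ⟨x, v, hxv, ht', memPos_mono (subgraphT _ c d hcd F x v hxv.2.1) hmem⟩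
end

section
/- Let X = ∏_{i=1}^n X_i be a product of n finite intervals of integers, each of cardinality at least 2, let F = (f_1,…,f_n) be a map from X to itself, and let Y be a subinterval of X_1 such that every t ∈ T_1(G_F) satisfies t < min(Y) or max(Y) < t. Define F̃ = (f̃_1,…,f̃_n) : X → X by f̃_i = f_i for i > 1 and f̃_1(x) = min(Y) if f_1(x) < min(Y), f̃_1(x) = f_1(x) if f_1(x) ∈ Y, and f̃_1(x) = max(Y) if f_1(x) > max(Y). Then for every (x,v) ∈ X', vertex 1 belongs to no positive circuit of the local interaction graph with thresholds G_{F̃}(x,v). -/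
private def clampZ (c d z : ℤ) : ℤ := if z < c then c else if d < z then d else z

private lemma clampFirst_eq_clampZ {n : ℕ} (i0 : Fin n) (c d : ℤ)
    (F : (Fin n → ℤ) → Fin n → ℤ) (y : Fin n → ℤ) :
    clampFirst i0 c d F y i0 = clampZ c d (F y i0) := by
  simp [clampFirst, clampZ]

private lemma clampZ_mem {c d : ℤ} (hcd : c ≤ d) (z : ℤ) :
    c ≤ clampZ c d z ∧ clampZ c d z ≤ d := by
  unfold clampZ; split_ifs <;> omega

private lemma clampZ_lt {c d : ℤ} (hcd : c ≤ d) {p q : ℤ} {t : ℚ}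
    (h1 : (clampZ c d p : ℚ) < t) (h2 : t < (clampZ c d q : ℚ)) :
    (p : ℚ) < t ∧ t < (q : ℚ) := by
  have hp : p ≤ clampZ c d p ∨ clampZ c d p = d := by unfold clampZ; split_ifs <;> omega
  have hq : clampZ c d q ≤ q ∨ clampZ c d q = c := by unfold clampZ; split_ifs <;> omega
  have hPd : clampZ c d q ≤ d := by unfold clampZ; split_ifs <;> omega
  have hQc : c ≤ clampZ c d p := by unfold clampZ; split_ifs <;> omega
  constructor
  · rcases hp with h | h
    · exact lt_of_le_of_lt (by exact_mod_cast h) h1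
    · exfalso; rw [h] at h1
      have : (clampZ c d q : ℚ) ≤ (d : ℚ) := by exact_mod_cast hPd
      linarith
  · rcases hq with h | h
    · exact lt_of_lt_of_le h2 (by exact_mod_cast h)
    · exfalso; rw [h] at h2
      have : (c : ℚ) ≤ (clampZ c d p : ℚ) := by exact_mod_cast hQc
      linarith

private lemma div_sign_transfer {A B w : ℤ} (hw : w = 1 ∨ w = -1)
    (hAB : (0 < A ∧ 0 < B) ∨ (A < 0 ∧ B < 0)) :
    (0 < A / w → 0 < B / w) ∧ (A / w < 0 → B / w < 0) := by
  rcases hw with rfl | rfl <;> rcases hAB with ⟨h1, h2⟩ | ⟨h1, h2⟩ <;>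
    constructor <;> intro h <;> omega

private lemma edge_lift {n : ℕ} {i0 : Fin n} {c d : ℤ} (hcd : c ≤ d)
    {F : (Fin n → ℤ) → Fin n → ℤ} {x v : Fin n → ℤ} (hv : IsDir v)
    {e : SEdge n} (he : e ∈ localGraphT (clampFirst i0 c d F) x v) :
    e ∈ localGraphT F x v := by
  obtain ⟨hg, hbs⟩ := he
  by_cases hi : e.2.2 = i0
  · set x' := Function.update x e.1 (x e.1 + v e.1) with hx'
    have h1 : clampFirst i0 c d F x e.2.2 = clampZ c d (F x e.2.2) := by
      rw [hi]; exact clampFirst_eq_clampZ ..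
    have h2 : clampFirst i0 c d F x' e.2.2 = clampZ c d (F x' e.2.2) := by
      rw [hi]; exact clampFirst_eq_clampZ ..
    set p := F x e.2.2 with hp
    set q := F x' e.2.2 with hq
    rw [h1, h2] at hbs
    have hjace : jac (clampFirst i0 c d F) x v e.2.2 e.1
        = (clampZ c d q - clampZ c d p) / v e.1 := by
      rw [jac, h1, h2]
    have hjac : jac F x v e.2.2 e.1 = (q - p) / v e.1 := rfl
    rcases hbs with ⟨hl, hr⟩ | ⟨hl, hr⟩
    · obtain ⟨hpt, htq⟩ := clampZ_lt hcd hl hr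
      have hPQ : clampZ c d p < clampZ c d q := by exact_mod_cast hl.trans hr
      have hpq : p < q := by exact_mod_cast hpt.trans htq
      have hsg := div_sign_transfer (A := clampZ c d q - clampZ c d p) (B := q - p)
        (hv e.1) (Or.inl ⟨by omega, by omega⟩)
      refine ⟨?_, Or.inl ⟨hpt, htq⟩⟩
      rw [localGraph, Set.mem_setOf_eq, hjac]
      rw [localGraph, Set.mem_setOf_eq, hjace] at hg
      rcases hg with ⟨hs, hpos⟩ | ⟨hs, hneg⟩
      · exact Or.inl ⟨hs, hsg.1 hpos⟩
      · exact Or.inr ⟨hs, hsg.2 hneg⟩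
    · obtain ⟨hpt, htq⟩ := clampZ_lt hcd hl hr
      have hPQ : clampZ c d q < clampZ c d p := by exact_mod_cast hl.trans hr
      have hpq : q < p := by exact_mod_cast hpt.trans htq
      have hsg := div_sign_transfer (A := clampZ c d q - clampZ c d p) (B := q - p)
        (hv e.1) (Or.inr ⟨by omega, by omega⟩)
      refine ⟨?_, Or.inr ⟨hpt, htq⟩⟩
      rw [localGraph, Set.mem_setOf_eq, hjac]
      rw [localGraph, Set.mem_setOf_eq, hjace] at hg
      rcases hg with ⟨hs, hpos⟩ | ⟨hs, hneg⟩
      · exact Or.inl ⟨hs, hsg.1 hpos⟩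
      · exact Or.inr ⟨hs, hsg.2 hneg⟩
  · have hC : ∀ y, clampFirst i0 c d F y e.2.2 = F y e.2.2 := fun y => by
      simp [clampFirst, hi]
    have hjac : jac (clampFirst i0 c d F) x v e.2.2 e.1 = jac F x v e.2.2 e.1 := by
      rw [jac, jac, hC, hC]
    constructor
    · rw [localGraph, Set.mem_setOf_eq, ← hjac]; exact hg
    · rw [← hC, ← hC]; exact hbs

private lemma exists_edge_into {n : ℕ} {E : Set (SEdge n)} {C : List (SEdge n)}
    (h : IsCircuit E C) {i : Fin n} (hi : i ∈ C.map (fun e => e.1)) :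
    ∃ e ∈ C, e.2.2 = i := by
  obtain ⟨hne, _, hcons, hclose, _⟩ := h
  obtain ⟨e', he', hfst⟩ := List.mem_map.mp hi
  obtain ⟨⟨k, hk⟩, hget⟩ := List.mem_iff_get.mp he'
  match k with
  | 0 =>
    refine ⟨C.getLast hne, List.getLast_mem hne, ?_⟩
    rw [List.getLast?_eq_getLast hne, List.head?_eq_head hne] at hclose
    simp only [Option.map_some] at hclose
    rw [Option.some_inj] at hclose
    rw [hclose, ← List.get_mk_zero hk, hget, hfst]
  | k + 1 =>
    refine ⟨C.get ⟨k, Nat.lt_of_succ_lt hk⟩, List.get_mem C _, ?_⟩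
    rw [hcons k hk, hget, hfst]

/-- If every `t ∈ T_1(G_F)` satisfies `t < min Y` or `max Y < t`, then
vertex `1` belongs to no positive circuit of any `G_{F̃}(x,v)`. -/
theorem stmt15 {n : ℕ} (hn : 0 < n) (a b : Fin n → ℤ) (hab : ∀ i, a i + 1 ≤ b i)
    (F : (Fin n → ℤ) → Fin n → ℤ)
    (hF : ∀ x ∈ StateSpace a b, F x ∈ StateSpace a b)
    (c d : ℤ) (hc : a ⟨0, hn⟩ ≤ c) (hcd : c ≤ d) (hd : d ≤ b ⟨0, hn⟩)
    (hT : ∀ t ∈ Tset a b F ⟨0, hn⟩, t < (c : ℝ) ∨ (d : ℝ) < t) :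
    ∀ x v, InX' a b x v →
      ¬ MemPosCircuit (localGraphT (clampFirst ⟨0, hn⟩ c d F) x v) ⟨0, hn⟩ := by
  intro x v hxv hmem
  obtain ⟨C, ⟨hcirc, hpos⟩, hi⟩ := hmem
  obtain ⟨hne, hE, hcons, hclose, hnd⟩ := hcirc
  have hlift : ∀ e ∈ C, e ∈ localGraphT F x v := fun e he =>
    edge_lift hcd hxv.2.1 (hE e he)
  have hmemT : ((x ⟨0, hn⟩ : ℝ) + (v ⟨0, hn⟩ : ℝ) / 2) ∈ Tset a b F ⟨0, hn⟩ :=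
    ⟨x, v, hxv, rfl, ⟨C, ⟨⟨hne, hlift, hcons, hclose, hnd⟩, hpos⟩, hi⟩⟩
  have hout := hT _ hmemT
  obtain ⟨e, heC, hein⟩ := exists_edge_into ⟨hne, hE, hcons, hclose, hnd⟩ hi
  obtain ⟨-, hbs⟩ := hE e heC
  rw [hein, clampFirst_eq_clampZ, clampFirst_eq_clampZ] at hbs
  have h1 := clampZ_mem hcd (F x ⟨0, hn⟩)
  have h2 := clampZ_mem hcd (F (Function.update x e.1 (x e.1 + v e.1)) ⟨0, hn⟩)
  have hc1 : (c : ℚ) ≤ (clampZ c d (F x ⟨0, hn⟩) : ℚ) := by exact_mod_cast h1.1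
  have hd1 : (clampZ c d (F x ⟨0, hn⟩) : ℚ) ≤ (d : ℚ) := by exact_mod_cast h1.2
  have hc2 : (c : ℚ) ≤ (clampZ c d (F (Function.update x e.1 (x e.1 + v e.1)) ⟨0, hn⟩) : ℚ) := by
    exact_mod_cast h2.1
  have hd2 : (clampZ c d (F (Function.update x e.1 (x e.1 + v e.1)) ⟨0, hn⟩) : ℚ) ≤ (d : ℚ) := by
    exact_mod_cast h2.2
  have hcq : (c : ℚ) < (x ⟨0, hn⟩ : ℚ) + (v ⟨0, hn⟩ : ℚ) / 2 ∧
      (x ⟨0, hn⟩ : ℚ) + (v ⟨0, hn⟩ : ℚ) / 2 < (d : ℚ) := by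
    rcases hbs with ⟨hl, hr⟩ | ⟨hl, hr⟩ <;> exact ⟨by linarith, by linarith⟩
  have hR1 : (c : ℝ) < (x ⟨0, hn⟩ : ℝ) + (v ⟨0, hn⟩ : ℝ) / 2 := by
    have := (Rat.cast_lt (K := ℝ)).mpr hcq.1
    push_cast at this
    convert this using 2 <;> norm_num
  have hR2 : (x ⟨0, hn⟩ : ℝ) + (v ⟨0, hn⟩ : ℝ) / 2 < (d : ℝ) := by
    have := (Rat.cast_lt (K := ℝ)).mpr hcq.2
    push_cast at this
    convert this using 2 <;> norm_num
  rcases hout with h | h <;> linarith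
end

section
/- Let X = ∏_{i=1}^n X_i be a product of n finite intervals of integers, each of cardinality at least 2, let F = (f_1,…,f_n) be a map from X to itself, and let Y be a subinterval of X_1. Define F̃ = (f̃_1,…,f̃_n) : X → X by f̃_i = f_i for i > 1 and f̃_1(x) = min(Y) if f_1(x) < min(Y), f̃_1(x) = f_1(x) if f_1(x) ∈ Y, and f̃_1(x) = max(Y) if f_1(x) > max(Y). If A is an attractor of Γ(F) containing a point z with z_1 ∈ Y, then the set Ā = {x ∈ A : x_1 ∈ Y} is a (nonempty) trap domain of the asynchronous state transition graph Γ(F̃); in particular, A contains an attractor of Γ(F̃). -/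
lemma state_finite {n : ℕ} (a b : Fin n → ℤ) : (StateSpace a b).Finite := by
  have h : StateSpace a b ⊆ Set.pi Set.univ (fun i => Set.Icc (a i) (b i)) := by
    intro x hx i _; exact ⟨(hx i).1, (hx i).2⟩
  exact (Set.Finite.pi (fun i => Set.finite_Icc _ _)).subset h

lemma exists_attractor_subset {n : ℕ} (a b : Fin n → ℤ)
    (G : (Fin n → ℤ) → Fin n → ℤ) (k : ℕ) :
    ∀ T : Set (Fin n → ℤ), T.ncard ≤ k → IsTrapDomain a b G T →
      ∃ A', IsAttractor a b G A' ∧ A' ⊆ T := by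
  induction k with
  | zero =>
    intro T hcard hT
    have hfin : T.Finite := (state_finite a b).subset hT.2.1
    have hpos : 0 < T.ncard := (Set.ncard_pos hfin).mpr hT.1
    omega
  | succ k ih =>
    intro T hcard hT
    by_cases h : ∀ B, IsTrapDomain a b G B → B ⊆ T → B = T
    · exact ⟨T, ⟨hT, h⟩, subset_rfl⟩
    · push_neg at h
      obtain ⟨B, hB, hBT, hBne⟩ := h
      have hfin : T.Finite := (state_finite a b).subset hT.2.1
      have hlt : B.ncard < T.ncard :=
        Set.ncard_lt_ncard (ssubset_of_subset_of_ne hBT hBne) hfin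
      obtain ⟨A', hA', hsub⟩ := ih B (by omega) hB
      exact ⟨A', hA', hsub.trans hBT⟩

/-- If `A` is an attractor of `Γ(F)` containing a point `z` with `z_1 ∈ Y`,
then `Ā = {x ∈ A | x_1 ∈ Y}` is a trap domain of `Γ(F̃)`; in particular `A`
contains an attractor of `Γ(F̃)`. -/
theorem stmt16 {n : ℕ} (hn : 0 < n) (a b : Fin n → ℤ) (hab : ∀ i, a i + 1 ≤ b i)
    (F : (Fin n → ℤ) → Fin n → ℤ)
    (hF : ∀ x ∈ StateSpace a b, F x ∈ StateSpace a b)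
    (c d : ℤ) (hc : a ⟨0, hn⟩ ≤ c) (hcd : c ≤ d) (hd : d ≤ b ⟨0, hn⟩)
    (A : Set (Fin n → ℤ)) (hA : IsAttractor a b F A)
    (z : Fin n → ℤ) (hz : z ∈ A) (hz1 : c ≤ z ⟨0, hn⟩ ∧ z ⟨0, hn⟩ ≤ d) :
    IsTrapDomain a b (clampFirst ⟨0, hn⟩ c d F)
        {x ∈ A | c ≤ x ⟨0, hn⟩ ∧ x ⟨0, hn⟩ ≤ d} ∧
    ∃ A', IsAttractor a b (clampFirst ⟨0, hn⟩ c d F) A' ∧ A' ⊆ A := by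
  obtain ⟨⟨hAne, hAsub, hAtrap⟩, hAmin⟩ := hA
  set i0 : Fin n := ⟨0, hn⟩ with hi0
  have key : IsTrapDomain a b (clampFirst i0 c d F)
      {x ∈ A | c ≤ x i0 ∧ x i0 ≤ d} := by
    refine ⟨⟨z, hz, hz1⟩, fun x hx => hAsub hx.1, ?_⟩
    rintro x ⟨hxA, hxc, hxd⟩ y ⟨i, h1, h2⟩
    by_cases hi : i = i0
    · subst hi
      by_cases h3 : F x i0 < c
      · have hval : clampFirst i0 c d F x i0 = c := by simp [clampFirst, h3]
        rw [hval] at h1 h2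
        have hlt : c < x i0 := lt_of_le_of_ne hxc h1
        have hs1 : (c - x i0).sign = -1 := Int.sign_eq_neg_one_of_neg (by omega)
        have hs2 : (F x i0 - x i0).sign = -1 := Int.sign_eq_neg_one_of_neg (by omega)
        have hFne : F x i0 ≠ x i0 := by omega
        have hyA : y ∈ A := hAtrap x hxA y ⟨i0, hFne, by rw [h2, hs1, hs2]⟩
        refine ⟨hyA, ?_, ?_⟩ <;> rw [h2, hs1] <;> simp <;> omega
      · by_cases h4 : d < F x i0
        · have hval : clampFirst i0 c d F x i0 = d := by simp [clampFirst, h3, h4]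
          rw [hval] at h1 h2
          have hlt : x i0 < d := lt_of_le_of_ne hxd h1.symm
          have hs1 : (d - x i0).sign = 1 := Int.sign_eq_one_of_pos (by omega)
          have hs2 : (F x i0 - x i0).sign = 1 := Int.sign_eq_one_of_pos (by omega)
          have hFne : F x i0 ≠ x i0 := by omega
          have hyA : y ∈ A := hAtrap x hxA y ⟨i0, hFne, by rw [h2, hs1, hs2]⟩
          refine ⟨hyA, ?_, ?_⟩ <;> rw [h2, hs1] <;> simp <;> omega
        · have hval : clampFirst i0 c d F x i0 = F x i0 := by simp [clampFirst, h3, h4]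
          rw [hval] at h1 h2
          have hyA : y ∈ A := hAtrap x hxA y ⟨i0, h1, h2⟩
          push_neg at h3 h4
          rcases lt_or_gt_of_ne h1 with hlt | hlt
          · have hs : (F x i0 - x i0).sign = -1 := Int.sign_eq_neg_one_of_neg (by omega)
            refine ⟨hyA, ?_, ?_⟩ <;> rw [h2, hs] <;> simp <;> omega
          · have hs : (F x i0 - x i0).sign = 1 := Int.sign_eq_one_of_pos (by omega)
            refine ⟨hyA, ?_, ?_⟩ <;> rw [h2, hs] <;> simp <;> omega
    · have hval : clampFirst i0 c d F x i = F x i := by simp [clampFirst, hi]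
      rw [hval] at h1 h2
      have hyA : y ∈ A := hAtrap x hxA y ⟨i, h1, h2⟩
      have hy0 : y i0 = x i0 := by rw [h2]; exact Function.update_of_ne (Ne.symm hi) _ _
      exact ⟨hyA, by rw [hy0]; exact hxc, by rw [hy0]; exact hxd⟩
  refine ⟨key, ?_⟩
  obtain ⟨A', hA', hsub⟩ := exists_attractor_subset a b (clampFirst i0 c d F)
    ({x ∈ A | c ≤ x i0 ∧ x i0 ≤ d}).ncard _ le_rfl key
  exact ⟨A', hA', fun x hx => (hsub hx).1⟩
end
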